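/- Let (t, e) be a counital fusion morphism on an object A of a braided monoidal category C. Then the functor G := (–) ⊗ A : C ⟶ C together with ε_X := (1_X ⊗ e) ≫ ρ_X : X ⊗ A ⟶ X and Ǧ₂^{X,Y} := (1_X ⊗ b_{A,Y} ⊗ 1_A) ≫ (1_{X⊗Y} ⊗ t) ≫ (1_X ⊗ b_{A,Y}⁻¹ ⊗ 1_A) : (X ⊗ A) ⊗ (Y ⊗ A) ⟶ ((X ⊗ A) ⊗ Y) ⊗ A is a right multiplier bicomonad on C: for all objects X, Y, Z, (1_{GX} ⊗ Ǧ₂^{Y,Z}) ≫ Ǧ₂^{X, GY⊗Z} ≫ G(Ǧ₂^{X,Y} ⊗ 1_Z) = (Ǧ₂^{X,Y} ⊗ 1_{GZ}) ≫ Ǧ₂^{GX⊗Y, Z} and Ǧ₂^{X,Y} ≫ ε_{GX⊗Y} = 1_{GX} ⊗ ε_Y. -/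

import Mathlib

open CategoryTheory Category MonoidalCategory

set_option maxHeartbeats 8000000

universe v u

variable {C : Type u} [Category.{v} C] [MonoidalCategory C] [BraidedCategory C]

/-- The fusion equation for `t : A ⊗ A ⟶ A ⊗ A` in a braided monoidal category,
with all coherence isomorphisms made explicit (domain `A ⊗ (A ⊗ A)`). -/
def FusionEq (A : C) (t : A ⊗ A ⟶ A ⊗ A) : Prop :=
  (A ◁ t) ≫ (α_ A A A).inv ≫ ((β_ A A).hom ▷ A) ≫ (α_ A A A).hom ≫ (A ◁ t) ≫
      (α_ A A A).inv ≫ ((β_ A A).inv ▷ A) ≫ (t ▷ A) ≫ (α_ A A A).hom =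
    (α_ A A A).inv ≫ (t ▷ A) ≫ (α_ A A A).hom ≫ (A ◁ t)

/-- The counitality condition `t ≫ (1 ⊗ e) = 1 ⊗ e`. -/
def Counital (A : C) (t : A ⊗ A ⟶ A ⊗ A) (e : A ⟶ 𝟙_ C) : Prop :=
  t ≫ (A ◁ e) = A ◁ e

/-- The multiplication induced by a counital fusion morphism:
`m := t ≫ (e ⊗ 1) ≫ λ_A`. -/
def mulOf (A : C) (t : A ⊗ A ⟶ A ⊗ A) (e : A ⟶ 𝟙_ C) : A ⊗ A ⟶ A :=
  t ≫ (e ▷ A) ≫ (λ_ A).hom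


/-- The counit `ε_X := (1_X ⊗ e) ≫ ρ_X` of the right multiplier bicomonad
induced by a counital fusion morphism on the functor `(–) ⊗ A`. -/
def epsOf (A : C) (e : A ⟶ 𝟙_ C) (X : C) : X ⊗ A ⟶ X :=
  (X ◁ e) ≫ (ρ_ X).hom

/-- The binary structure
`Ǧ₂^{X,Y} := (1_X ⊗ b_{A,Y} ⊗ 1_A) ≫ (1_{X⊗Y} ⊗ t) ≫ (1_X ⊗ b_{A,Y}⁻¹ ⊗ 1_A)`
of the right multiplier bicomonad induced by a counital fusion morphism on the
functor `(–) ⊗ A`, with all coherence isomorphisms made explicit. -/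
def checkG₂ (A : C) (t : A ⊗ A ⟶ A ⊗ A) (X Y : C) :
    (X ⊗ A) ⊗ (Y ⊗ A) ⟶ ((X ⊗ A) ⊗ Y) ⊗ A :=
  (α_ X A (Y ⊗ A)).hom ≫
    (X ◁ ((α_ A Y A).inv ≫ ((β_ A Y).hom ▷ A) ≫ (α_ Y A A).hom ≫ (Y ◁ t) ≫
      (α_ Y A A).inv ≫ ((β_ A Y).inv ▷ A))) ≫
    (α_ X (A ⊗ Y) A).inv ≫ ((α_ X A Y).inv ▷ A)

namespace CheckGAux

open BraidedCategory

/-- Braid the first `A` strand past `W`, apply `t` to the two `A` strands, braid back. -/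
def Jb (A : C) (t : A ⊗ A ⟶ A ⊗ A) (W : C) : (A ⊗ W) ⊗ A ⟶ (A ⊗ W) ⊗ A :=
  ((β_ A W).hom ▷ A) ≫ (α_ W A A).hom ≫ (W ◁ t) ≫ (α_ W A A).inv ≫ ((β_ A W).inv ▷ A)

lemma checkG₂_eq (A : C) (t : A ⊗ A ⟶ A ⊗ A) (X Y : C) :
    checkG₂ A t X Y = (α_ X A (Y ⊗ A)).hom ≫
      (X ◁ ((α_ A Y A).inv ≫ Jb A t Y)) ≫
      (α_ X (A ⊗ Y) A).inv ≫ ((α_ X A Y).inv ▷ A) := by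
  simp only [checkG₂, Jb, assoc]

lemma Jb_counit (A : C) (t : A ⊗ A ⟶ A ⊗ A) (e : A ⟶ 𝟙_ C)
    (hcou : Counital A t e) (Y : C) :
    Jb A t Y ≫ ((A ⊗ Y) ◁ e) = (A ⊗ Y) ◁ e := by
  simp only [Jb, assoc]
  rw [← whisker_exchange]
  rw [← associator_inv_naturality_right_assoc]
  rw [← MonoidalCategory.whiskerLeft_comp_assoc, hcou]
  rw [← associator_naturality_right_assoc]
  rw [← whisker_exchange_assoc]
  simp

lemma c1alt (A : C) (t : A ⊗ A ⟶ A ⊗ A) (Z : C) :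
    A ◁ Jb A t Z =
      𝟙 (A ⊗ ((A ⊗ Z) ⊗ A)) ⊗≫ ((β_ (A ⊗ A) Z).hom ▷ A) ⊗≫ ((Z ⊗ A) ◁ t) ⊗≫
        ((β_ (A ⊗ A) Z).inv ▷ A) ⊗≫ 𝟙 (A ⊗ ((A ⊗ Z) ⊗ A)) := by
  symm
  calc 𝟙 (A ⊗ ((A ⊗ Z) ⊗ A)) ⊗≫ ((β_ (A ⊗ A) Z).hom ▷ A) ⊗≫ ((Z ⊗ A) ◁ t) ⊗≫
        ((β_ (A ⊗ A) Z).inv ▷ A) ⊗≫ 𝟙 (A ⊗ ((A ⊗ Z) ⊗ A))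
      = 𝟙 (A ⊗ ((A ⊗ Z) ⊗ A)) ⊗≫ (A ◁ ((β_ A Z).hom ▷ A)) ⊗≫
          (((β_ A Z).hom ▷ (A ⊗ A)) ≫ ((Z ⊗ A) ◁ t) ≫ ((β_ A Z).inv ▷ (A ⊗ A))) ⊗≫
          (A ◁ ((β_ A Z).inv ▷ A)) ⊗≫ 𝟙 (A ⊗ ((A ⊗ Z) ⊗ A)) := by
        rw [braiding_tensor_left_hom, braiding_tensor_left_inv]; monoidal
    _ = 𝟙 (A ⊗ ((A ⊗ Z) ⊗ A)) ⊗≫ (A ◁ ((β_ A Z).hom ▷ A)) ⊗≫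
          (((A ⊗ Z) ◁ t) ≫ ((β_ A Z).hom ▷ (A ⊗ A)) ≫ ((β_ A Z).inv ▷ (A ⊗ A))) ⊗≫
          (A ◁ ((β_ A Z).inv ▷ A)) ⊗≫ 𝟙 (A ⊗ ((A ⊗ Z) ⊗ A)) := by
        rw [← whisker_exchange_assoc]
    _ = A ◁ Jb A t Z := by
        rw [← comp_whiskerRight, Iso.hom_inv_id, id_whiskerRight, comp_id]
        simp only [Jb]; monoidal

lemma core (A Z : C) (f : A ⊗ A ⟶ A ⊗ A) :
    ((β_ (A ⊗ A) Z).inv ▷ A) ≫ ((f ▷ Z) ▷ A) =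
      ((Z ◁ f) ▷ A) ≫ ((β_ (A ⊗ A) Z).inv ▷ A) := by
  rw [← comp_whiskerRight, ← comp_whiskerRight, braiding_inv_naturality_right]

lemma mpush (A Z : C) (f : A ⊗ A ⟶ A ⊗ A) {V : C} (h : ((A ⊗ A) ⊗ Z) ⊗ A ⟶ V) :
    ((β_ (A ⊗ A) Z).inv ▷ A) ⊗≫ ((f ▷ Z) ▷ A) ⊗≫ h =
      ((Z ◁ f) ▷ A) ⊗≫ ((β_ (A ⊗ A) Z).inv ▷ A) ⊗≫ h := by
  calc ((β_ (A ⊗ A) Z).inv ▷ A) ⊗≫ ((f ▷ Z) ▷ A) ⊗≫ h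
      = (((β_ (A ⊗ A) Z).inv ▷ A) ≫ ((f ▷ Z) ▷ A)) ⊗≫ h := by monoidal
    _ = (((Z ◁ f) ▷ A) ≫ ((β_ (A ⊗ A) Z).inv ▷ A)) ⊗≫ h := by rw [core]
    _ = ((Z ◁ f) ▷ A) ⊗≫ ((β_ (A ⊗ A) Z).inv ▷ A) ⊗≫ h := by monoidal

lemma mpull (A Z : C) (f : A ⊗ A ⟶ A ⊗ A) {V : C} (h : (Z ⊗ A) ⊗ (A ⊗ A) ⟶ V) :
    ((β_ (A ⊗ A) Z).hom ▷ A) ⊗≫ ((Z ◁ f) ▷ A) ⊗≫ h =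
      ((f ▷ Z) ▷ A) ⊗≫ ((β_ (A ⊗ A) Z).hom ▷ A) ⊗≫ h := by
  have core2 : ((β_ (A ⊗ A) Z).hom ▷ A) ≫ ((Z ◁ f) ▷ A) =
      ((f ▷ Z) ▷ A) ≫ ((β_ (A ⊗ A) Z).hom ▷ A) := by
    rw [← comp_whiskerRight, ← comp_whiskerRight, braiding_naturality_left]
  calc ((β_ (A ⊗ A) Z).hom ▷ A) ⊗≫ ((Z ◁ f) ▷ A) ⊗≫ h
      = (((β_ (A ⊗ A) Z).hom ▷ A) ≫ ((Z ◁ f) ▷ A)) ⊗≫ h := by monoidal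
    _ = (((f ▷ Z) ▷ A) ≫ ((β_ (A ⊗ A) Z).hom ▷ A)) ⊗≫ h := by rw [core2]
    _ = ((f ▷ Z) ▷ A) ⊗≫ ((β_ (A ⊗ A) Z).hom ▷ A) ⊗≫ h := by monoidal

lemma mcan (A Z : C) {V : C} (h : (Z ⊗ A) ⊗ (A ⊗ A) ⟶ V) :
    ((β_ (A ⊗ A) Z).inv ▷ A) ⊗≫ ((β_ (A ⊗ A) Z).hom ▷ A) ⊗≫ h =
      𝟙 ((Z ⊗ (A ⊗ A)) ⊗ A) ⊗≫ h := by
  calc ((β_ (A ⊗ A) Z).inv ▷ A) ⊗≫ ((β_ (A ⊗ A) Z).hom ▷ A) ⊗≫ h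
      = (((β_ (A ⊗ A) Z).inv ▷ A) ≫ ((β_ (A ⊗ A) Z).hom ▷ A)) ⊗≫ h := by monoidal
    _ = 𝟙 ((Z ⊗ (A ⊗ A)) ⊗ A) ⊗≫ h := by
        rw [← comp_whiskerRight, Iso.inv_hom_id, id_whiskerRight]

lemma star (A Z : C) (t : A ⊗ A ⟶ A ⊗ A) (hfus : FusionEq A t) :
    (A ◁ Jb A t Z) ⊗≫ ((β_ A A).hom ▷ (Z ⊗ A)) ⊗≫ (A ◁ Jb A t Z) ⊗≫
        ((β_ A A).inv ▷ (Z ⊗ A)) ⊗≫ ((t ▷ (Z ⊗ A)) ⊗≫ 𝟙 (A ⊗ ((A ⊗ Z) ⊗ A))) =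
      𝟙 (A ⊗ ((A ⊗ Z) ⊗ A)) ⊗≫ (t ▷ (Z ⊗ A)) ⊗≫ (A ◁ Jb A t Z) := by
  have hfus' : (A ◁ t) ≫ (α_ A A A).inv ≫ ((β_ A A).hom ▷ A) ≫ (α_ A A A).hom ≫ (A ◁ t) ≫
      (α_ A A A).inv ≫ ((β_ A A).inv ▷ A) ≫ (t ▷ A) ≫ (α_ A A A).hom =
    (α_ A A A).inv ≫ (t ▷ A) ≫ (α_ A A A).hom ≫ (A ◁ t) := hfus
  have hZ : Z ◁ ((A ◁ t) ≫ (α_ A A A).inv ≫ ((β_ A A).hom ▷ A) ≫ (α_ A A A).hom ≫ (A ◁ t) ≫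
        (α_ A A A).inv ≫ ((β_ A A).inv ▷ A) ≫ (t ▷ A) ≫ (α_ A A A).hom) =
      Z ◁ ((α_ A A A).inv ≫ (t ▷ A) ≫ (α_ A A A).hom ≫ (A ◁ t)) := by rw [hfus']
  calc (A ◁ Jb A t Z) ⊗≫ ((β_ A A).hom ▷ (Z ⊗ A)) ⊗≫ (A ◁ Jb A t Z) ⊗≫
        ((β_ A A).inv ▷ (Z ⊗ A)) ⊗≫ ((t ▷ (Z ⊗ A)) ⊗≫ 𝟙 (A ⊗ ((A ⊗ Z) ⊗ A)))
      = (𝟙 (A ⊗ ((A ⊗ Z) ⊗ A)) ⊗≫ ((β_ (A ⊗ A) Z).hom ▷ A) ⊗≫ ((Z ⊗ A) ◁ t) ⊗≫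
          ((β_ (A ⊗ A) Z).inv ▷ A) ⊗≫ 𝟙 (A ⊗ ((A ⊗ Z) ⊗ A))) ⊗≫ ((β_ A A).hom ▷ (Z ⊗ A)) ⊗≫
          (𝟙 (A ⊗ ((A ⊗ Z) ⊗ A)) ⊗≫ ((β_ (A ⊗ A) Z).hom ▷ A) ⊗≫ ((Z ⊗ A) ◁ t) ⊗≫
          ((β_ (A ⊗ A) Z).inv ▷ A) ⊗≫ 𝟙 (A ⊗ ((A ⊗ Z) ⊗ A))) ⊗≫
          ((β_ A A).inv ▷ (Z ⊗ A)) ⊗≫ ((t ▷ (Z ⊗ A)) ⊗≫ 𝟙 (A ⊗ ((A ⊗ Z) ⊗ A))) := by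
        rw [c1alt]
    _ = 𝟙 (A ⊗ ((A ⊗ Z) ⊗ A)) ⊗≫ ((β_ (A ⊗ A) Z).hom ▷ A) ⊗≫ ((Z ⊗ A) ◁ t) ⊗≫
          ((β_ (A ⊗ A) Z).inv ▷ A) ⊗≫ (((β_ A A).hom ▷ Z) ▷ A) ⊗≫
          ((β_ (A ⊗ A) Z).hom ▷ A) ⊗≫ ((Z ⊗ A) ◁ t) ⊗≫
          ((β_ (A ⊗ A) Z).inv ▷ A) ⊗≫ (((β_ A A).inv ▷ Z) ▷ A) ⊗≫
          ((t ▷ Z) ▷ A) ⊗≫ 𝟙 (((A ⊗ A) ⊗ Z) ⊗ A) ⊗≫ 𝟙 (A ⊗ ((A ⊗ Z) ⊗ A)) := by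
        monoidal
    _ = 𝟙 (A ⊗ ((A ⊗ Z) ⊗ A)) ⊗≫ ((β_ (A ⊗ A) Z).hom ▷ A) ⊗≫ ((Z ⊗ A) ◁ t) ⊗≫
          ((Z ◁ (β_ A A).hom) ▷ A) ⊗≫ ((β_ (A ⊗ A) Z).inv ▷ A) ⊗≫
          ((β_ (A ⊗ A) Z).hom ▷ A) ⊗≫ ((Z ⊗ A) ◁ t) ⊗≫
          ((Z ◁ (β_ A A).inv) ▷ A) ⊗≫ ((Z ◁ t) ▷ A) ⊗≫
          ((β_ (A ⊗ A) Z).inv ▷ A) ⊗≫ 𝟙 (((A ⊗ A) ⊗ Z) ⊗ A) ⊗≫ 𝟙 (A ⊗ ((A ⊗ Z) ⊗ A)) := by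
        rw [mpush, mpush, mpush]
    _ = 𝟙 (A ⊗ ((A ⊗ Z) ⊗ A)) ⊗≫ ((β_ (A ⊗ A) Z).hom ▷ A) ⊗≫ ((Z ⊗ A) ◁ t) ⊗≫
          ((Z ◁ (β_ A A).hom) ▷ A) ⊗≫ (𝟙 ((Z ⊗ (A ⊗ A)) ⊗ A) ⊗≫ ((Z ⊗ A) ◁ t)) ⊗≫
          ((Z ◁ (β_ A A).inv) ▷ A) ⊗≫ ((Z ◁ t) ▷ A) ⊗≫
          ((β_ (A ⊗ A) Z).inv ▷ A) ⊗≫ 𝟙 (((A ⊗ A) ⊗ Z) ⊗ A) ⊗≫ 𝟙 (A ⊗ ((A ⊗ Z) ⊗ A)) := by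
        rw [mcan]; monoidal
    _ = 𝟙 (A ⊗ ((A ⊗ Z) ⊗ A)) ⊗≫ ((β_ (A ⊗ A) Z).hom ▷ A) ⊗≫
          (Z ◁ ((A ◁ t) ≫ (α_ A A A).inv ≫ ((β_ A A).hom ▷ A) ≫ (α_ A A A).hom ≫ (A ◁ t) ≫
            (α_ A A A).inv ≫ ((β_ A A).inv ▷ A) ≫ (t ▷ A) ≫ (α_ A A A).hom)) ⊗≫
          ((β_ (A ⊗ A) Z).inv ▷ A) ⊗≫ 𝟙 (A ⊗ ((A ⊗ Z) ⊗ A)) := by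
        monoidal
    _ = 𝟙 (A ⊗ ((A ⊗ Z) ⊗ A)) ⊗≫ ((β_ (A ⊗ A) Z).hom ▷ A) ⊗≫
          (Z ◁ ((α_ A A A).inv ≫ (t ▷ A) ≫ (α_ A A A).hom ≫ (A ◁ t))) ⊗≫
          ((β_ (A ⊗ A) Z).inv ▷ A) ⊗≫ 𝟙 (A ⊗ ((A ⊗ Z) ⊗ A)) := by
        rw [hZ]
    _ = 𝟙 (A ⊗ ((A ⊗ Z) ⊗ A)) ⊗≫ ((β_ (A ⊗ A) Z).hom ▷ A) ⊗≫
          ((Z ◁ t) ▷ A) ⊗≫ ((Z ⊗ A) ◁ t) ⊗≫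
          ((β_ (A ⊗ A) Z).inv ▷ A) ⊗≫ 𝟙 (A ⊗ ((A ⊗ Z) ⊗ A)) := by
        monoidal
    _ = 𝟙 (A ⊗ ((A ⊗ Z) ⊗ A)) ⊗≫ ((t ▷ Z) ▷ A) ⊗≫ ((β_ (A ⊗ A) Z).hom ▷ A) ⊗≫
          ((Z ⊗ A) ◁ t) ⊗≫ ((β_ (A ⊗ A) Z).inv ▷ A) ⊗≫ 𝟙 (A ⊗ ((A ⊗ Z) ⊗ A)) := by
        rw [mpull]
    _ = 𝟙 (A ⊗ ((A ⊗ Z) ⊗ A)) ⊗≫ (t ▷ (Z ⊗ A)) ⊗≫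
          (𝟙 (A ⊗ ((A ⊗ Z) ⊗ A)) ⊗≫ ((β_ (A ⊗ A) Z).hom ▷ A) ⊗≫ ((Z ⊗ A) ◁ t) ⊗≫
            ((β_ (A ⊗ A) Z).inv ▷ A) ⊗≫ 𝟙 (A ⊗ ((A ⊗ Z) ⊗ A))) := by
        monoidal
    _ = 𝟙 (A ⊗ ((A ⊗ Z) ⊗ A)) ⊗≫ (t ▷ (Z ⊗ A)) ⊗≫ (A ◁ Jb A t Z) := by rw [← c1alt]

lemma mid_expand (A : C) (t : A ⊗ A ⟶ A ⊗ A) (Y Z : C) :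
    Jb A t ((Y ⊗ A) ⊗ Z) =
      𝟙 ((A ⊗ ((Y ⊗ A) ⊗ Z)) ⊗ A) ⊗≫ ((β_ A Y).hom ▷ ((A ⊗ Z) ⊗ A)) ⊗≫
        (Y ◁ (((β_ A A).hom ▷ (Z ⊗ A)) ⊗≫ (A ◁ Jb A t Z) ⊗≫ ((β_ A A).inv ▷ (Z ⊗ A)) ⊗≫
          𝟙 (A ⊗ ((A ⊗ Z) ⊗ A)))) ⊗≫
        ((β_ A Y).inv ▷ ((A ⊗ Z) ⊗ A)) ⊗≫ 𝟙 ((A ⊗ ((Y ⊗ A) ⊗ Z)) ⊗ A) := by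
  simp only [Jb, braiding_tensor_right_hom, braiding_tensor_right_inv]; monoidal

lemma key (A : C) (t : A ⊗ A ⟶ A ⊗ A) (Y Z : C) (hfus : FusionEq A t) :
    (A ◁ checkG₂ A t Y Z) ⊗≫ Jb A t ((Y ⊗ A) ⊗ Z) ⊗≫ ((Jb A t Y ▷ Z) ▷ A) =
      𝟙 (A ⊗ ((Y ⊗ A) ⊗ (Z ⊗ A))) ⊗≫ (Jb A t Y ▷ (Z ⊗ A)) ⊗≫ ((A ⊗ Y) ◁ Jb A t Z) ⊗≫
        𝟙 ((((A ⊗ Y) ⊗ A) ⊗ Z) ⊗ A) := by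
  calc (A ◁ checkG₂ A t Y Z) ⊗≫ Jb A t ((Y ⊗ A) ⊗ Z) ⊗≫ ((Jb A t Y ▷ Z) ▷ A)
      = 𝟙 (A ⊗ ((Y ⊗ A) ⊗ (Z ⊗ A))) ⊗≫ ((A ⊗ Y) ◁ Jb A t Z) ⊗≫
          Jb A t ((Y ⊗ A) ⊗ Z) ⊗≫ ((Jb A t Y ▷ Z) ▷ A) := by
        rw [checkG₂_eq]; monoidal
    _ = 𝟙 (A ⊗ ((Y ⊗ A) ⊗ (Z ⊗ A))) ⊗≫
          (((A ⊗ Y) ◁ Jb A t Z) ≫ ((β_ A Y).hom ▷ ((A ⊗ Z) ⊗ A))) ⊗≫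
          (Y ◁ (((β_ A A).hom ▷ (Z ⊗ A)) ⊗≫ (A ◁ Jb A t Z) ⊗≫ ((β_ A A).inv ▷ (Z ⊗ A)) ⊗≫
            𝟙 (A ⊗ ((A ⊗ Z) ⊗ A)))) ⊗≫
          (((β_ A Y).inv ▷ ((A ⊗ Z) ⊗ A)) ≫ ((β_ A Y).hom ▷ ((A ⊗ Z) ⊗ A))) ⊗≫
          (Y ◁ (t ▷ (Z ⊗ A))) ⊗≫ ((β_ A Y).inv ▷ ((A ⊗ Z) ⊗ A)) ⊗≫
          𝟙 ((((A ⊗ Y) ⊗ A) ⊗ Z) ⊗ A) := by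
        rw [mid_expand]; simp only [Jb]; monoidal
    _ = 𝟙 (A ⊗ ((Y ⊗ A) ⊗ (Z ⊗ A))) ⊗≫
          (((β_ A Y).hom ▷ ((A ⊗ Z) ⊗ A)) ≫ ((Y ⊗ A) ◁ Jb A t Z)) ⊗≫
          (Y ◁ (((β_ A A).hom ▷ (Z ⊗ A)) ⊗≫ (A ◁ Jb A t Z) ⊗≫ ((β_ A A).inv ▷ (Z ⊗ A)) ⊗≫
            𝟙 (A ⊗ ((A ⊗ Z) ⊗ A)))) ⊗≫
          (𝟙 ((Y ⊗ A) ⊗ ((A ⊗ Z) ⊗ A))) ⊗≫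
          (Y ◁ (t ▷ (Z ⊗ A))) ⊗≫ ((β_ A Y).inv ▷ ((A ⊗ Z) ⊗ A)) ⊗≫
          𝟙 ((((A ⊗ Y) ⊗ A) ⊗ Z) ⊗ A) := by
        rw [whisker_exchange, ← comp_whiskerRight, Iso.inv_hom_id, id_whiskerRight]
    _ = 𝟙 (A ⊗ ((Y ⊗ A) ⊗ (Z ⊗ A))) ⊗≫ ((β_ A Y).hom ▷ ((A ⊗ Z) ⊗ A)) ⊗≫
          (Y ◁ ((A ◁ Jb A t Z) ⊗≫ ((β_ A A).hom ▷ (Z ⊗ A)) ⊗≫ (A ◁ Jb A t Z) ⊗≫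
            ((β_ A A).inv ▷ (Z ⊗ A)) ⊗≫ ((t ▷ (Z ⊗ A)) ⊗≫ 𝟙 (A ⊗ ((A ⊗ Z) ⊗ A))))) ⊗≫
          ((β_ A Y).inv ▷ ((A ⊗ Z) ⊗ A)) ⊗≫ 𝟙 ((((A ⊗ Y) ⊗ A) ⊗ Z) ⊗ A) := by
        monoidal
    _ = 𝟙 (A ⊗ ((Y ⊗ A) ⊗ (Z ⊗ A))) ⊗≫ ((β_ A Y).hom ▷ ((A ⊗ Z) ⊗ A)) ⊗≫
          (Y ◁ (𝟙 (A ⊗ ((A ⊗ Z) ⊗ A)) ⊗≫ (t ▷ (Z ⊗ A)) ⊗≫ (A ◁ Jb A t Z))) ⊗≫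
          ((β_ A Y).inv ▷ ((A ⊗ Z) ⊗ A)) ⊗≫ 𝟙 ((((A ⊗ Y) ⊗ A) ⊗ Z) ⊗ A) := by
        rw [star A Z t hfus]
    _ = 𝟙 (A ⊗ ((Y ⊗ A) ⊗ (Z ⊗ A))) ⊗≫ ((β_ A Y).hom ▷ ((A ⊗ Z) ⊗ A)) ⊗≫
          (Y ◁ (t ▷ (Z ⊗ A))) ⊗≫
          (((Y ⊗ A) ◁ Jb A t Z) ≫ ((β_ A Y).inv ▷ ((A ⊗ Z) ⊗ A))) ⊗≫
          𝟙 ((((A ⊗ Y) ⊗ A) ⊗ Z) ⊗ A) := by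
        monoidal
    _ = 𝟙 (A ⊗ ((Y ⊗ A) ⊗ (Z ⊗ A))) ⊗≫ ((β_ A Y).hom ▷ ((A ⊗ Z) ⊗ A)) ⊗≫
          (Y ◁ (t ▷ (Z ⊗ A))) ⊗≫
          (((β_ A Y).inv ▷ ((A ⊗ Z) ⊗ A)) ≫ ((A ⊗ Y) ◁ Jb A t Z)) ⊗≫
          𝟙 ((((A ⊗ Y) ⊗ A) ⊗ Z) ⊗ A) := by
        rw [whisker_exchange]
    _ = 𝟙 (A ⊗ ((Y ⊗ A) ⊗ (Z ⊗ A))) ⊗≫ (Jb A t Y ▷ (Z ⊗ A)) ⊗≫ ((A ⊗ Y) ◁ Jb A t Z) ⊗≫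
          𝟙 ((((A ⊗ Y) ⊗ A) ⊗ Z) ⊗ A) := by
        simp only [Jb]; monoidal

end CheckGAux

open CheckGAux in
/-- For a counital fusion morphism `(t, e)` on `A`, the functor `(–) ⊗ A`
equipped with `checkG₂` and `epsOf` is a right multiplier bicomonad. -/
theorem tensorRight_rightMultiplierBicomonad (A : C) (t : A ⊗ A ⟶ A ⊗ A)
    (e : A ⟶ 𝟙_ C) (hfus : FusionEq A t) (hcou : Counital A t e) :
    (∀ X Y Z : C,
      (α_ (X ⊗ A) (Y ⊗ A) (Z ⊗ A)).hom ≫ ((X ⊗ A) ◁ checkG₂ A t Y Z) ≫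
          checkG₂ A t X ((Y ⊗ A) ⊗ Z) ≫
          (((α_ (X ⊗ A) (Y ⊗ A) Z).inv ≫ (checkG₂ A t X Y ▷ Z)) ▷ A) =
        (checkG₂ A t X Y ▷ (Z ⊗ A)) ≫ checkG₂ A t ((X ⊗ A) ⊗ Y) Z) ∧
    (∀ X Y : C,
      checkG₂ A t X Y ≫ epsOf A e ((X ⊗ A) ⊗ Y) = (X ⊗ A) ◁ epsOf A e Y) := by
  constructor
  · intro X Y Z
    calc (α_ (X ⊗ A) (Y ⊗ A) (Z ⊗ A)).hom ≫ ((X ⊗ A) ◁ checkG₂ A t Y Z) ≫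
          checkG₂ A t X ((Y ⊗ A) ⊗ Z) ≫
          (((α_ (X ⊗ A) (Y ⊗ A) Z).inv ≫ (checkG₂ A t X Y ▷ Z)) ▷ A)
        = 𝟙 (((X ⊗ A) ⊗ (Y ⊗ A)) ⊗ (Z ⊗ A)) ⊗≫
            (X ◁ ((A ◁ checkG₂ A t Y Z) ⊗≫ Jb A t ((Y ⊗ A) ⊗ Z) ⊗≫ ((Jb A t Y ▷ Z) ▷ A))) ⊗≫
            𝟙 ((((((X ⊗ A) ⊗ Y) ⊗ A) ⊗ Z) ⊗ A)) := by
          rw [checkG₂_eq A t X ((Y ⊗ A) ⊗ Z), checkG₂_eq A t X Y]; monoidal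
      _ = 𝟙 (((X ⊗ A) ⊗ (Y ⊗ A)) ⊗ (Z ⊗ A)) ⊗≫
            (X ◁ (𝟙 (A ⊗ ((Y ⊗ A) ⊗ (Z ⊗ A))) ⊗≫ (Jb A t Y ▷ (Z ⊗ A)) ⊗≫
              ((A ⊗ Y) ◁ Jb A t Z) ⊗≫ 𝟙 ((((A ⊗ Y) ⊗ A) ⊗ Z) ⊗ A))) ⊗≫
            𝟙 ((((((X ⊗ A) ⊗ Y) ⊗ A) ⊗ Z) ⊗ A)) := by
          rw [key A t Y Z hfus]
      _ = (checkG₂ A t X Y ▷ (Z ⊗ A)) ≫ checkG₂ A t ((X ⊗ A) ⊗ Y) Z := by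
          rw [checkG₂_eq A t X Y, checkG₂_eq A t ((X ⊗ A) ⊗ Y) Z]; monoidal
  · intro X Y
    calc checkG₂ A t X Y ≫ epsOf A e ((X ⊗ A) ⊗ Y)
        = 𝟙 ((X ⊗ A) ⊗ (Y ⊗ A)) ⊗≫
            (X ◁ ((α_ A Y A).inv ≫ (Jb A t Y ≫ ((A ⊗ Y) ◁ e)))) ⊗≫ 𝟙 ((X ⊗ A) ⊗ Y) := by
          rw [checkG₂_eq]; simp only [epsOf, Jb]; monoidal
      _ = 𝟙 ((X ⊗ A) ⊗ (Y ⊗ A)) ⊗≫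
            (X ◁ ((α_ A Y A).inv ≫ ((A ⊗ Y) ◁ e))) ⊗≫ 𝟙 ((X ⊗ A) ⊗ Y) := by
          rw [Jb_counit A t e hcou Y]
      _ = (X ⊗ A) ◁ epsOf A e Y := by simp only [epsOf]; monoidal
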